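/- arXiv:2002.12838 — 2 statements merged into one kernel-verified Lean document; each statement's English description precedes it below -/
import Mathlib

section
/- Let $n, m \geq 2$ be integers, let $\varepsilon \in \mathbb{C}$ be a primitive $m$-th root of unity, and let $\tilde{R} = \mathbb{C}[y,u,z]/(y^{(n-1)m} z - u^m + 1)$. Let $\sigma$ be the $\mathbb{C}$-algebra automorphism of $\tilde{R}$ determined by $y \mapsto \varepsilon y$, $u \mapsto \varepsilon^{-1} u$, $z \mapsto z$ (it exists since the defining relation is invariant). Then the fixed subalgebra $\tilde{R}^{\sigma} = \{a \in \tilde{R} : \sigma(a) = a\}$ is isomorphic as a $\mathbb{C}$-algebra to $\mathbb{C}[x,w,z]/(x^n z - w^m + x)$. -/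
open MvPolynomial

noncomputable section

/-- The ideal of relations of the surface `S̃ₙ,ₘ = {y^{(n-1)m} z = u^m - 1}`. -/
def relTilde (n m : ℕ) : Ideal (MvPolynomial (Fin 3) ℂ) :=
  Ideal.span {X 0 ^ ((n - 1) * m) * X 2 - X 1 ^ m + 1}

/-- The coordinate ring `ℂ[y,u,z]/(y^{(n-1)m} z - u^m + 1)` of the surface `S̃ₙ,ₘ`. -/
def RTilde (n m : ℕ) : Type :=
  MvPolynomial (Fin 3) ℂ ⧸ relTilde n m

instance (n m : ℕ) : CommRing (RTilde n m) := by unfold RTilde; infer_instance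

instance (n m : ℕ) : Algebra ℂ (RTilde n m) := by unfold RTilde; infer_instance

/-- The image of `y` in `RTilde n m`. -/
def yb (n m : ℕ) : RTilde n m := Ideal.Quotient.mk (relTilde n m) (X 0)

/-- The image of `u` in `RTilde n m`. -/
def ub (n m : ℕ) : RTilde n m := Ideal.Quotient.mk (relTilde n m) (X 1)

/-- The image of `z` in `RTilde n m`. -/
def zb (n m : ℕ) : RTilde n m := Ideal.Quotient.mk (relTilde n m) (X 2)

/-- The ideal of relations of the surface `Sₙ,ₘ = {x^n z = w^m - x}`. -/
def relS (n m : ℕ) : Ideal (MvPolynomial (Fin 3) ℂ) :=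
  Ideal.span {X 0 ^ n * X 2 - X 1 ^ m + X 0}

namespace Statement7Aux

abbrev A := MvPolynomial (Fin 2) ℂ
abbrev P3 := MvPolynomial (Fin 3) ℂ

def genT (n m : ℕ) : P3 := X 0 ^ ((n - 1) * m) * X 2 - X 1 ^ m + 1
def genS (n m : ℕ) : P3 := X 0 ^ n * X 2 - X 1 ^ m + X 0

lemma relTilde_eq (n m : ℕ) : relTilde n m = Ideal.span {genT n m} := rfl
lemma relS_eq (n m : ℕ) : relS n m = Ideal.span {genS n m} := rfl

/-- the substitution `x ↦ y^m, w ↦ y u, z ↦ z` at the polynomial level. -/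
def ψ (m : ℕ) : P3 →ₐ[ℂ] P3 := aeval ![X 0 ^ m, X 0 * X 1, X 2]

lemma ψ_X0 (m : ℕ) : ψ m (X 0) = X 0 ^ m := by simp [ψ]
lemma ψ_X1 (m : ℕ) : ψ m (X 1) = X 0 * X 1 := by simp [ψ]
lemma ψ_X2 (m : ℕ) : ψ m (X 2) = X 2 := by simp [ψ]

lemma ψ_genS (n m : ℕ) (hn : 1 ≤ n) : ψ m (genS n m) = X 0 ^ m * genT n m := by
  obtain ⟨k, rfl⟩ : ∃ k, n = k + 1 := ⟨n - 1, (Nat.succ_pred_eq_of_pos (by omega)).symm⟩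
  simp only [genS, genT, ψ, map_add, map_sub, map_mul, map_pow, map_one, aeval_X]
  simp only [Nat.add_sub_cancel, Matrix.cons_val_zero, Matrix.cons_val_one, Matrix.head_cons,
    Matrix.cons_val_two, Matrix.tail_cons]
  ring

/-- The quotient map `P3 → RTilde n m` as an algebra hom. -/
def mkT (n m : ℕ) : P3 →ₐ[ℂ] RTilde n m := Ideal.Quotient.mkₐ ℂ (relTilde n m)

lemma mkT_apply (n m : ℕ) (p : P3) : mkT n m p = Ideal.Quotient.mk (relTilde n m) p := rfl

/-- The map `ℂ[x,w,z]/(relS) → RTilde`. -/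
def φ (n m : ℕ) (hn : 1 ≤ n) : (MvPolynomial (Fin 3) ℂ ⧸ relS n m) →ₐ[ℂ] RTilde n m :=
  Ideal.Quotient.liftₐ (relS n m) ((mkT n m).comp (ψ m)) (by
    intro a ha
    rw [relS_eq, Ideal.mem_span_singleton] at ha
    obtain ⟨c, rfl⟩ := ha
    simp only [AlgHom.comp_apply, mkT_apply]
    refine Ideal.Quotient.eq_zero_iff_mem.mpr ?_
    rw [map_mul, ψ_genS n m hn, relTilde_eq,
      Ideal.mem_span_singleton]
    exact ⟨X 0 ^ m * ψ m c, by ring⟩)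

lemma φ_mk (n m : ℕ) (hn : 1 ≤ n) (p : P3) :
    φ n m hn (Ideal.Quotient.mk (relS n m) p) = mkT n m (ψ m p) := rfl

/- ### Injectivity machinery -/

/-- The iso `ℂ[x₀,x₁,x₂] ≃ ℂ[x₀,x₁][X]` making the variable `x₁` the polynomial variable. -/
def e : P3 ≃ₐ[ℂ] Polynomial A :=
  (renameEquiv ℂ (Equiv.swap 0 1)).trans (finSuccEquiv ℂ 2)

lemma e_X0 : e (X 0) = Polynomial.C (X 0) := by
  simp only [e, AlgEquiv.trans_apply, renameEquiv_apply, rename_X, Equiv.swap_apply_left]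
  rw [show (1 : Fin 3) = Fin.succ 0 from rfl, finSuccEquiv_X_succ]

lemma e_X1 : e (X 1) = Polynomial.X := by
  simp only [e, AlgEquiv.trans_apply, renameEquiv_apply, rename_X, Equiv.swap_apply_right]
  exact finSuccEquiv_X_zero

lemma e_X2 : e (X 2) = Polynomial.C (X 1) := by
  simp only [e, AlgEquiv.trans_apply, renameEquiv_apply, rename_X]
  rw [Equiv.swap_apply_of_ne_of_ne (by decide) (by decide)]
  rw [show (2 : Fin 3) = Fin.succ 1 from rfl, finSuccEquiv_X_succ]

/-- `x ↦ y^m` on the coefficient ring. -/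
def α (m : ℕ) : A →ₐ[ℂ] A := aeval ![X 0 ^ m, X 1]

/-- the substitution at the level of `A[X]`. -/
def Ψ (m : ℕ) : Polynomial A →ₐ[ℂ] Polynomial A :=
  Polynomial.aevalTower ((Polynomial.CAlgHom (R := ℂ) (A := A)).comp (α m))
    (Polynomial.C (X 0) * Polynomial.X)

lemma Ψ_C (m : ℕ) (a : A) : Ψ m (Polynomial.C a) = Polynomial.C (α m a) := by
  rw [Ψ, Polynomial.aevalTower_C]; rfl

lemma Ψ_X (m : ℕ) : Ψ m Polynomial.X = Polynomial.C (X 0) * Polynomial.X := by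
  rw [Ψ, Polynomial.aevalTower_X]

lemma comm_square (m : ℕ) (p : P3) : e (ψ m p) = Ψ m (e p) := by
  induction p using MvPolynomial.induction_on with
  | C a => rw [show (C a : P3) = algebraMap ℂ P3 a from rfl, AlgHom.commutes,
      AlgEquiv.commutes, AlgHom.commutes]
  | add p q hp hq => simp only [map_add, hp, hq]
  | mul_X p i hp =>
    rw [map_mul, map_mul, map_mul, hp, map_mul]
    refine congrArg (fun t => Ψ m (e p) * t) ?_
    fin_cases i
    · show e (ψ m (X 0)) = Ψ m (e (X 0))
      rw [ψ_X0, map_pow, e_X0, Ψ_C, ← Polynomial.C_pow]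
      congr 1
      simp [α]
    · show e (ψ m (X 1)) = Ψ m (e (X 1))
      rw [ψ_X1, map_mul, e_X0, e_X1, Ψ_X]
    · show e (ψ m (X 2)) = Ψ m (e (X 2))
      rw [ψ_X2, e_X2, Ψ_C]
      congr 1
      simp [α]

lemma coeff_Ψ (m : ℕ) (p : Polynomial A) (i : ℕ) :
    (Ψ m p).coeff i = α m (p.coeff i) * X 0 ^ i := by
  induction p using Polynomial.induction_on' with
  | add p q hp hq => simp [hp, hq, add_mul]
  | monomial k a =>
    have h1 : Ψ m (Polynomial.monomial k a) = Polynomial.monomial k (α m a * X 0 ^ k) := by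
      rw [← Polynomial.C_mul_X_pow_eq_monomial, ← Polynomial.C_mul_X_pow_eq_monomial,
        map_mul, map_pow, Ψ_C, Ψ_X, mul_pow, ← Polynomial.C_pow, ← mul_assoc, ← map_mul]
    rw [h1, Polynomial.coeff_monomial, Polynomial.coeff_monomial]
    split_ifs with h
    · subst h; rfl
    · simp

lemma aeval_eq_eval (v : Fin 2 → ℂ) (q : A) : (aeval v : A →ₐ[ℂ] ℂ) q = eval v q := by
  rw [aeval_def, Algebra.algebraMap_self]; rfl

lemma α_eval (m : ℕ) (p : A) (b c : ℂ) :
    eval ![b ^ m, c] p = eval ![b, c] (α m p) := by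
  rw [← aeval_eq_eval, ← aeval_eq_eval]
  have h1 : (MvPolynomial.aeval ![b, c] : A →ₐ[ℂ] ℂ).comp (α m)
      = MvPolynomial.aeval ![b ^ m, c] := by
    rw [α, comp_aeval]
    congr 1
    funext i
    fin_cases i <;> simp
  exact (DFunLike.congr_fun h1 p).symm

lemma α_inj (m : ℕ) (hm : 0 < m) : Function.Injective (α m) := by
  rw [injective_iff_map_eq_zero]
  intro p hp
  apply MvPolynomial.funext (q := 0)
  intro v
  obtain ⟨b, hb⟩ := IsAlgClosed.exists_pow_nat_eq (v 0) hm
  have hv : v = ![b ^ m, v 1] := by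
    funext i; fin_cases i <;> simp [hb]
  rw [hv, α_eval m p b (v 1), hp]
  simp

lemma ker_ψ (n m : ℕ) (hn : 2 ≤ n) (hm : 2 ≤ m) {p : P3}
    (h : ψ m p ∈ relTilde n m) : p ∈ relS n m := by
  have hm0 : m ≠ 0 := by omega
  set fT : Polynomial A :=
    Polynomial.X ^ m - Polynomial.C (X 0 ^ ((n - 1) * m) * X 1 + 1) with hfTdef
  set gS : Polynomial A :=
    Polynomial.X ^ m - Polynomial.C (X 0 ^ n * X 1 + X 0) with hgSdef
  have hfT : e (genT n m) = -fT := by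
    rw [hfTdef, genT, map_add, map_sub, map_mul, map_pow, map_pow, map_one, e_X0, e_X1, e_X2,
      Polynomial.C_add, Polynomial.C_mul, Polynomial.C_pow, Polynomial.C_1]
    ring
  have hgS : e (genS n m) = -gS := by
    rw [hgSdef, genS, map_add, map_sub, map_mul, map_pow, map_pow, e_X0, e_X1, e_X2,
      Polynomial.C_add, Polynomial.C_mul, Polynomial.C_pow]
    ring
  have hfTm : fT.Monic := Polynomial.monic_X_pow_sub_C _ hm0
  have hgSm : gS.Monic := Polynomial.monic_X_pow_sub_C _ hm0
  rw [relTilde_eq, Ideal.mem_span_singleton] at h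
  have h2 : fT ∣ Ψ m (e p) := by
    have h' : e (genT n m) ∣ e (ψ m p) := map_dvd e.toAlgHom h
    have h'' : e (ψ m p) = Ψ m (e p) := comm_square m p
    rw [hfT, h''] at h'
    exact (neg_dvd (α := Polynomial A)).mp h'
  set q := e p with hq
  have hdiv : q %ₘ gS + gS * (q /ₘ gS) = q := Polynomial.modByMonic_add_div q gS
  have hΨgS : Ψ m gS = Polynomial.C ((X 0 : A) ^ m) * fT := by
    obtain ⟨k, rfl⟩ : ∃ k, n = k + 1 := ⟨n - 1, (Nat.succ_pred_eq_of_pos (by omega)).symm⟩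
    rw [hgSdef, hfTdef, map_sub, map_pow, Ψ_X, Ψ_C]
    have hα : α m (X 0 ^ (k + 1) * X 1 + X 0) = X 0 ^ (m * (k + 1)) * X 1 + X 0 ^ m := by
      simp only [α, map_add, map_mul, map_pow, aeval_X, Matrix.cons_val_zero,
        Matrix.cons_val_one, Matrix.head_cons, ← pow_mul]
    simp only [Nat.add_sub_cancel]
    rw [hα, Polynomial.C_add, Polynomial.C_mul, Polynomial.C_pow, Polynomial.C_pow,
      Polynomial.C_add, Polynomial.C_mul, Polynomial.C_pow, Polynomial.C_1]
    ring
  have h3 : fT ∣ Ψ m (q %ₘ gS) := by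
    have hmod_eq : q %ₘ gS = q - gS * (q /ₘ gS) := eq_sub_of_add_eq hdiv
    have heq : Ψ m (q %ₘ gS) = Ψ m q - Polynomial.C ((X 0 : A) ^ m) * fT * Ψ m (q /ₘ gS) := by
      rw [hmod_eq, map_sub, map_mul, hΨgS]
    rw [heq]
    exact dvd_sub h2 ((dvd_mul_left fT _).mul_right _)
  have hdegfT : fT.natDegree = m := Polynomial.natDegree_X_pow_sub_C
  have hR0 : Ψ m (q %ₘ gS) = 0 := by
    by_contra hne
    have hdeg := Polynomial.natDegree_le_of_dvd h3 hne
    rw [hdegfT] at hdeg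
    have hlt : (Ψ m (q %ₘ gS)).natDegree < m := by
      rw [Polynomial.natDegree_lt_iff_degree_lt hne, Polynomial.degree_lt_iff_coeff_zero]
      intro k hk
      rw [coeff_Ψ]
      have : (q %ₘ gS).coeff k = 0 := by
        apply Polynomial.coeff_eq_zero_of_degree_lt
        calc (q %ₘ gS).degree < gS.degree := Polynomial.degree_modByMonic_lt q hgSm
        _ = (m : WithBot ℕ) := Polynomial.degree_X_pow_sub_C (by omega) _
        _ ≤ (k : WithBot ℕ) := by exact_mod_cast hk
      rw [this, map_zero, zero_mul]
    omega
  have hcoeff : ∀ i, (q %ₘ gS).coeff i = 0 := by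
    intro i
    have hco := congrArg (fun f => Polynomial.coeff f i) hR0
    simp only [coeff_Ψ, Polynomial.coeff_zero] at hco
    rcases mul_eq_zero.mp hco with hc | hc
    · exact α_inj m (by omega) (by rw [hc, map_zero])
    · exact absurd hc (pow_ne_zero _ (MvPolynomial.X_ne_zero _))
  have hR : q %ₘ gS = 0 := Polynomial.ext fun i => by rw [hcoeff, Polynomial.coeff_zero]
  have hgq : gS ∣ q := by
    refine ⟨q /ₘ gS, ?_⟩
    conv_lhs => rw [← hdiv]
    rw [hR, zero_add]
  rw [relS_eq, Ideal.mem_span_singleton]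
  have hdvd : e (genS n m) ∣ e p := by rw [hgS]; exact (neg_dvd (α := Polynomial A)).mpr hgq
  obtain ⟨c, hc⟩ := hdvd
  exact ⟨e.symm c, by apply e.injective; rw [map_mul, hc, AlgEquiv.apply_symm_apply]⟩

lemma φ_inj (n m : ℕ) (hn : 2 ≤ n) (hm : 2 ≤ m) :
    Function.Injective (φ n m (by omega : 1 ≤ n)) := by
  rw [injective_iff_map_eq_zero]
  intro a ha
  obtain ⟨p, rfl⟩ := Ideal.Quotient.mk_surjective a
  rw [φ_mk, mkT_apply] at ha
  replace ha := Ideal.Quotient.eq_zero_iff_mem.mp ha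
  rw [Ideal.Quotient.eq_zero_iff_mem]
  exact ker_ψ n m hn hm ha


/- ### The fixed subalgebra -/

lemma mkT_X0 (n m : ℕ) : mkT n m (X 0) = yb n m := rfl
lemma mkT_X1 (n m : ℕ) : mkT n m (X 1) = ub n m := rfl
lemma mkT_X2 (n m : ℕ) : mkT n m (X 2) = zb n m := rfl

lemma mem_yb_pow (n m : ℕ) (hn : 1 ≤ n) : yb n m ^ m ∈ (φ n m hn).range := by
  rw [AlgHom.mem_range]
  exact ⟨Ideal.Quotient.mk (relS n m) (X 0), by rw [φ_mk, ψ_X0, map_pow, mkT_X0]⟩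

lemma mem_w (n m : ℕ) (hn : 1 ≤ n) : yb n m * ub n m ∈ (φ n m hn).range := by
  rw [AlgHom.mem_range]
  exact ⟨Ideal.Quotient.mk (relS n m) (X 1), by rw [φ_mk, ψ_X1, map_mul, mkT_X0, mkT_X1]⟩

lemma mem_zb (n m : ℕ) (hn : 1 ≤ n) : zb n m ∈ (φ n m hn).range := by
  rw [AlgHom.mem_range]
  exact ⟨Ideal.Quotient.mk (relS n m) (X 2), by rw [φ_mk, ψ_X2, mkT_X2]⟩

lemma mem_ub_pow (n m : ℕ) (hn : 1 ≤ n) : ub n m ^ m ∈ (φ n m hn).range := by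
  rw [AlgHom.mem_range]
  refine ⟨Ideal.Quotient.mk (relS n m) (X 0 ^ (n - 1) * X 2 + 1), ?_⟩
  rw [φ_mk, map_add, map_mul, map_pow, ψ_X0, ψ_X2, map_one]
  have hub : ub n m ^ m = mkT n m (X 1 ^ m) := by rw [map_pow, mkT_X1]
  rw [hub, mkT_apply, mkT_apply]
  refine Ideal.Quotient.eq.mpr ?_
  have hXp : ((X 0 : P3) ^ m) ^ (n - 1) = X 0 ^ ((n - 1) * m) := by
    rw [← pow_mul, Nat.mul_comm]
  rw [relTilde_eq, Ideal.mem_span_singleton, hXp]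
  exact ⟨1, by rw [genT]; ring⟩

lemma mono_mem (n m : ℕ) (hn : 1 ≤ n) (a b c : ℕ) (hab : a ≡ b [MOD m]) :
    yb n m ^ a * ub n m ^ b * zb n m ^ c ∈ (φ n m hn).range := by
  rcases le_total a b with h | h
  · obtain ⟨t, ht⟩ := (Nat.modEq_iff_dvd' h).mp hab
    have hb : b = a + m * t := by omega
    subst hb
    have key : yb n m ^ a * ub n m ^ (a + m * t) * zb n m ^ c
        = (yb n m * ub n m) ^ a * (ub n m ^ m) ^ t * zb n m ^ c := by
      rw [mul_pow, pow_add, ← pow_mul]; ring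
    rw [key]
    exact mul_mem (mul_mem (pow_mem (mem_w n m hn) a) (pow_mem (mem_ub_pow n m hn) t))
      (pow_mem (mem_zb n m hn) c)
  · obtain ⟨t, ht⟩ := (Nat.modEq_iff_dvd' h).mp hab.symm
    have ha : a = b + m * t := by omega
    subst ha
    have key : yb n m ^ (b + m * t) * ub n m ^ b * zb n m ^ c
        = (yb n m * ub n m) ^ b * (yb n m ^ m) ^ t * zb n m ^ c := by
      rw [mul_pow, pow_add, ← pow_mul]; ring
    rw [key]
    exact mul_mem (mul_mem (pow_mem (mem_w n m hn) b) (pow_mem (mem_yb_pow n m hn) t))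
      (pow_mem (mem_zb n m hn) c)

lemma modeq_of_pow_eq {ε : ℂ} {m : ℕ} (hε : IsPrimitiveRoot ε m) (hε0 : ε ≠ 0) {a b : ℕ}
    (h : ε ^ a = ε ^ b) : a ≡ b [MOD m] := by
  suffices H : ∀ a b : ℕ, a ≤ b → ε ^ a = ε ^ b → a ≡ b [MOD m] by
    rcases le_total a b with hab | hab
    · exact H a b hab h
    · exact (H b a hab h.symm).symm
  intro a b hab hh
  have h2 : ε ^ a * ε ^ (b - a) = ε ^ a * 1 := by
    rw [mul_one, ← pow_add, Nat.add_sub_cancel' hab]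
    exact hh.symm
  have h3 : ε ^ (b - a) = 1 := mul_left_cancel₀ (pow_ne_zero a hε0) h2
  exact (Nat.modEq_iff_dvd' hab).mpr ((hε.pow_eq_one_iff_dvd _).mp h3)

lemma pow_apply_smul {n m : ℕ} (σ : RTilde n m ≃ₐ[ℂ] RTilde n m) (v : RTilde n m) (ξ : ℂ)
    (hv : σ v = ξ • v) : ∀ k : ℕ, (σ ^ k) v = ξ ^ k • v := by
  intro k
  induction k with
  | zero => simp
  | succ k ih =>
    rw [pow_succ, AlgEquiv.mul_apply, hv, map_smul, ih, smul_smul, ← pow_succ']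

lemma sigma_mono {n m : ℕ} {ε : ℂ} {σ : RTilde n m ≃ₐ[ℂ] RTilde n m}
    (hσy : σ (yb n m) = ε • yb n m) (hσu : σ (ub n m) = ε⁻¹ • ub n m)
    (hσz : σ (zb n m) = zb n m) (a b c : ℕ) :
    σ (yb n m ^ a * ub n m ^ b * zb n m ^ c)
      = (ε ^ a * (ε⁻¹) ^ b) • (yb n m ^ a * ub n m ^ b * zb n m ^ c) := by
  rw [map_mul, map_mul, map_pow, map_pow, map_pow, hσy, hσu, hσz, smul_pow, smul_pow,
    smul_mul_smul_comm, smul_mul_assoc]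

lemma mkT_monomial (n m : ℕ) (d : Fin 3 →₀ ℕ) (c : ℂ) :
    mkT n m (monomial d c) = c • (yb n m ^ d 0 * ub n m ^ d 1 * zb n m ^ d 2) := by
  rw [monomial_eq]
  have hprod : (d.prod fun i e => (X i : P3) ^ e) = X 0 ^ d 0 * X 1 ^ d 1 * X 2 ^ d 2 := by
    rw [Finsupp.prod_fintype _ _ (fun i => pow_zero _), Fin.prod_univ_three]
  rw [hprod, ← MvPolynomial.smul_eq_C_mul, map_smul, map_mul, map_mul, map_pow, map_pow,
    map_pow, mkT_X0, mkT_X1, mkT_X2]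

lemma fixed_gen {n m : ℕ} {ε : ℂ} {σ : RTilde n m ≃ₐ[ℂ] RTilde n m}
    (hm0 : m ≠ 0) (hε : IsPrimitiveRoot ε m)
    (hσy : σ (yb n m) = ε • yb n m) (hσu : σ (ub n m) = ε⁻¹ • ub n m)
    (hσz : σ (zb n m) = zb n m) (p : P3) :
    σ (mkT n m (ψ m p)) = mkT n m (ψ m p) := by
  have hεm : ε ^ m = 1 := hε.pow_eq_one
  have hε0 : ε ≠ 0 := fun h0 => by
    rw [h0, zero_pow hm0] at hεm; exact zero_ne_one hεm
  induction p using MvPolynomial.induction_on with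
  | C a =>
    rw [show (C a : P3) = algebraMap ℂ P3 a from rfl, AlgHom.commutes, AlgHom.commutes,
      AlgEquiv.commutes]
  | add p q hp hq => simp only [map_add, hp, hq]
  | mul_X p i hp =>
    rw [map_mul, map_mul, map_mul, hp]
    congr 1
    fin_cases i
    · show σ (mkT n m (ψ m (X 0))) = mkT n m (ψ m (X 0))
      rw [ψ_X0, map_pow, mkT_X0, map_pow, hσy, smul_pow, hεm, one_smul]
    · show σ (mkT n m (ψ m (X 1))) = mkT n m (ψ m (X 1))
      rw [ψ_X1, map_mul, mkT_X0, mkT_X1, map_mul, hσy, hσu, smul_mul_smul_comm,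
        mul_inv_cancel₀ hε0, one_smul]
    · show σ (mkT n m (ψ m (X 2))) = mkT n m (ψ m (X 2))
      rw [ψ_X2, mkT_X2, hσz]

lemma eq_le_range (n m : ℕ) (hn1 : 1 ≤ n) (hm : 2 ≤ m) {ε : ℂ} (hε : IsPrimitiveRoot ε m)
    {σ : RTilde n m ≃ₐ[ℂ] RTilde n m}
    (hσy : σ (yb n m) = ε • yb n m) (hσu : σ (ub n m) = ε⁻¹ • ub n m)
    (hσz : σ (zb n m) = zb n m) :
    ∀ r : RTilde n m, σ r = r → r ∈ (φ n m hn1).range := by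
  intro r hr
  have hm0 : m ≠ 0 := by omega
  have hεm : ε ^ m = 1 := hε.pow_eq_one
  have hε0 : ε ≠ 0 := fun h0 => by
    rw [h0, zero_pow hm0] at hεm; exact zero_ne_one hεm
  obtain ⟨p, rfl⟩ := Ideal.Quotient.mk_surjective r
  rw [← mkT_apply] at hr ⊢
  have hfix : ∀ k : ℕ, (σ ^ k) (mkT n m p) = mkT n m p := by
    intro k
    induction k with
    | zero => rfl
    | succ k ih => rw [pow_succ, AlgEquiv.mul_apply, hr, ih]
  have hsum : ∑ k ∈ Finset.range m, (σ ^ k) (mkT n m p) = (m : ℂ) • mkT n m p := by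
    rw [Finset.sum_congr rfl fun k _ => hfix k, Finset.sum_const, Finset.card_range,
      Nat.cast_smul_eq_nsmul]
  have hmem : ∑ k ∈ Finset.range m, (σ ^ k) (mkT n m p) ∈ (φ n m hn1).range := by
    rw [as_sum p]
    simp_rw [map_sum]
    rw [Finset.sum_comm]
    refine sum_mem fun d _ => ?_
    have hσv : σ (yb n m ^ d 0 * ub n m ^ d 1 * zb n m ^ d 2)
        = (ε ^ d 0 * (ε⁻¹) ^ d 1) • (yb n m ^ d 0 * ub n m ^ d 1 * zb n m ^ d 2) :=
      sigma_mono hσy hσu hσz _ _ _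
    have hk : ∀ k : ℕ, (σ ^ k) (mkT n m (monomial d (coeff d p)))
        = (coeff d p * (ε ^ d 0 * (ε⁻¹) ^ d 1) ^ k)
            • (yb n m ^ d 0 * ub n m ^ d 1 * zb n m ^ d 2) := by
      intro k
      rw [mkT_monomial, map_smul, pow_apply_smul σ _ _ hσv k, smul_smul]
    rw [Finset.sum_congr rfl fun k _ => hk k, ← Finset.sum_smul, ← Finset.mul_sum]
    by_cases hξ : ε ^ d 0 * (ε⁻¹) ^ d 1 = 1
    · refine Subalgebra.smul_mem _ ?_ _
      refine mono_mem n m hn1 _ _ _ ?_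
      have h1 : ε ^ d 0 = ε ^ d 1 := by
        rw [inv_pow, mul_inv_eq_one₀ (pow_ne_zero _ hε0)] at hξ
        exact hξ
      exact modeq_of_pow_eq hε hε0 h1
    · have h2 : (ε⁻¹) ^ m = 1 := by rw [inv_pow, hεm, inv_one]
      have hξm : (ε ^ d 0 * (ε⁻¹) ^ d 1) ^ m = 1 := by
        have hc : (ε ^ d 0 * (ε⁻¹) ^ d 1) ^ m = (ε ^ m) ^ d 0 * ((ε⁻¹) ^ m) ^ d 1 := by
          ring
        rw [hc, hεm, h2, one_pow, one_pow, one_mul]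
      have hgeo : ∑ k ∈ Finset.range m, (ε ^ d 0 * (ε⁻¹) ^ d 1) ^ k = 0 := by
        have hgm := geom_sum_mul (ε ^ d 0 * (ε⁻¹) ^ d 1) m
        rw [hξm, sub_self] at hgm
        exact (mul_eq_zero.mp hgm).resolve_right (sub_ne_zero.mpr hξ)
      rw [hgeo, mul_zero, zero_smul]
      exact zero_mem _
  have hfinal : mkT n m p = (m : ℂ)⁻¹ • ∑ k ∈ Finset.range m, (σ ^ k) (mkT n m p) := by
    rw [hsum, smul_smul, inv_mul_cancel₀ (Nat.cast_ne_zero.mpr hm0), one_smul]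
  rw [hfinal]
  exact Subalgebra.smul_mem _ hmem _

end Statement7Aux

open Statement7Aux in
theorem statement7 (n m : ℕ) (hn : 2 ≤ n) (hm : 2 ≤ m)
    (ε : ℂ) (hε : IsPrimitiveRoot ε m)
    (σ : RTilde n m ≃ₐ[ℂ] RTilde n m)
    (hσy : σ (yb n m) = ε • yb n m)
    (hσu : σ (ub n m) = ε⁻¹ • ub n m)
    (hσz : σ (zb n m) = zb n m) :
    Nonempty (↥(AlgHom.equalizer σ.toAlgHom (AlgHom.id ℂ (RTilde n m))) ≃ₐ[ℂ]
      (MvPolynomial (Fin 3) ℂ ⧸ relS n m)) := by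
  have hn1 : 1 ≤ n := by omega
  have hrange : (φ n m hn1).range = AlgHom.equalizer σ.toAlgHom (AlgHom.id ℂ (RTilde n m)) := by
    apply le_antisymm
    · rintro x hx
      obtain ⟨s, rfl⟩ := (AlgHom.mem_range _).mp hx
      obtain ⟨p, rfl⟩ := Ideal.Quotient.mk_surjective s
      rw [AlgHom.mem_equalizer]
      show σ (φ n m hn1 (Ideal.Quotient.mk (relS n m) p))
          = AlgHom.id ℂ (RTilde n m) (φ n m hn1 (Ideal.Quotient.mk (relS n m) p))
      rw [AlgHom.id_apply, φ_mk]
      exact fixed_gen (by omega) hε hσy hσu hσz p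
    · intro r hr
      rw [AlgHom.mem_equalizer] at hr
      exact eq_le_range n m hn1 hm hε hσy hσu hσz r hr
  exact ⟨((AlgEquiv.ofInjective _ (φ_inj n m hn hm)).trans
    (Subalgebra.equivOfEq _ _ hrange)).symm⟩

end
end

section
/- Let $n, m \geq 2$ be integers, let $\varepsilon \in \mathbb{C}$ be a primitive $m$-th root of unity, and let $\tilde{R} = \mathbb{C}[y,u,z]/(y^{(n-1)m} z - u^m + 1)$. Let $\sigma$ be the $\mathbb{C}$-algebra automorphism of $\tilde{R}$ determined by $y \mapsto \varepsilon y$, $u \mapsto \varepsilon^{-1} u$, $z \mapsto z$, and let $\tilde{R}^{\sigma} = \{a \in \tilde{R} : \sigma(a) = a\}$ be the fixed subalgebra. Then $\tilde{R}$ is an étale $\tilde{R}^{\sigma}$-algebra, i.e., the inclusion $\tilde{R}^{\sigma} \hookrightarrow \tilde{R}$ is formally étale and of finite presentation. -/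
set_option synthInstance.maxHeartbeats 1000000
set_option maxHeartbeats 4000000


open MvPolynomial

noncomputable section

open TensorProduct

section Abstract

variable {A R : Type} [CommRing A] [CommRing R] [Algebra A R]
variable {ι : Type} [Fintype ι]

theorem formallyEtale_of_sep [Module.Projective A R] (x y : ι → R)
    (h1 : ∑ j, x j * y j = 1)
    (hcomm : ∀ s : R, ∑ j, (s * x j) ⊗ₜ[A] y j = ∑ j, x j ⊗ₜ[A] (y j * s)) :
    Algebra.FormallyEtale A R := by
  rw [Algebra.FormallyEtale.iff_formallyUnramified_and_formallySmooth]
  constructor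
  · -- FormallyUnramified
    rw [Algebra.FormallyUnramified.iff_comp_injective]
    intro B _ _ I hI f₁ f₂ hf
    have hIsq : ∀ a b : B, a ∈ I → b ∈ I → a * b = 0 := fun a b ha hb => by
      have : a * b ∈ I ^ 2 := by rw [sq]; exact Ideal.mul_mem_mul ha hb
      simpa [hI] using this
    have hfr : ∀ r : R, Ideal.Quotient.mk I (f₁ r) = Ideal.Quotient.mk I (f₂ r) := fun r => by
      have := AlgHom.congr_fun hf r
      simpa using this
    set δ : R → B := fun r => f₁ r - f₂ r with hδ
    have hδI : ∀ r, δ r ∈ I := fun r => by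
      rw [← Ideal.Quotient.eq_zero_iff_mem]
      simp [hδ, map_sub, hfr r]
    -- bilinear map  (a, b) ↦ δ a * f₂ b
    set Ψ : R →ₗ[A] R →ₗ[A] B := LinearMap.mk₂ A (fun a b => δ a * f₂ b)
      (fun a a' b => by simp [hδ]; ring)
      (fun c a b => by simp [hδ, Algebra.smul_def]; ring)
      (fun a b b' => by simp [hδ]; ring)
      (fun c a b => by simp [hδ, Algebra.smul_def]; ring) with hΨ
    have happ : ∀ p : R,
        ∑ j, δ (p * x j) * f₂ (y j) = ∑ j, δ (x j) * f₂ (y j * p) := fun p => by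
      have := congrArg (TensorProduct.lift Ψ) (hcomm p)
      simpa [map_sum, hΨ] using this
    ext p
    have hT : (∑ j, δ (x j) * f₂ (y j)) ∈ I :=
      Ideal.sum_mem _ fun j _ => Ideal.mul_mem_right _ _ (hδI _)
    set T := ∑ j, δ (x j) * f₂ (y j) with hTdef
    have expand : ∀ p, ∑ j, δ (p * x j) * f₂ (y j) = f₁ p * T + δ p := fun p => by
      have : ∀ j : ι, δ (p * x j) * f₂ (y j)
          = f₁ p * (δ (x j) * f₂ (y j)) + δ p * (f₂ (x j) * f₂ (y j)) := fun j => by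
        simp only [hδ, map_mul]; ring
      rw [Finset.sum_congr rfl fun j _ => this j, Finset.sum_add_distrib, ← Finset.mul_sum,
        ← Finset.mul_sum]
      have h2 : ∑ i, f₂ (x i) * f₂ (y i) = 1 := by
        rw [← map_one f₂, ← h1, map_sum]; simp [map_mul]
      rw [h2, mul_one, hTdef]
    have rhs : ∑ j, δ (x j) * f₂ (y j * p) = T * f₂ p := by
      rw [hTdef, Finset.sum_mul]
      refine Finset.sum_congr rfl fun j _ => by rw [map_mul]; ring
    have key : f₁ p * T + δ p = T * f₂ p := by rw [← expand, ← rhs, happ]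
    have : δ p = T * f₂ p - f₁ p * T := by linear_combination key
    have hf₁T : f₁ p * T = f₂ p * T := by
      have : (f₁ p - f₂ p) * T = 0 := hIsq _ _ (hδI p) hT
      linear_combination this
    have : δ p = 0 := by rw [this, hf₁T]; ring
    have := sub_eq_zero.mp this
    exact this
  · -- FormallySmooth
    apply Algebra.FormallySmooth.of_comp_surjective
    intro B _ _ I hI f
    have hIsq : ∀ a b : B, a ∈ I → b ∈ I → a * b = 0 := fun a b ha hb => by
      have : a * b ∈ I ^ 2 := by rw [sq]; exact Ideal.mul_mem_mul ha hb
      simpa [hI] using this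
    have memI : ∀ b : B, Ideal.Quotient.mk I b = 0 → b ∈ I := fun b h =>
      Ideal.Quotient.eq_zero_iff_mem.mp h
    obtain ⟨g0, hg0⟩ := Module.projective_lifting_property
      (Ideal.Quotient.mkₐ A I).toLinearMap f.toLinearMap
      (fun b => Ideal.Quotient.mk_surjective b)
    have hg0' : ∀ r, Ideal.Quotient.mk I (g0 r) = f r := fun r => by
      have := LinearMap.congr_fun hg0 r
      simpa using this
    have hi₀ : g0 1 - 1 ∈ I := memI _ (by simp [hg0' 1])
    set g1 : R →ₗ[A] B := g0 - (LinearMap.mulRight A (g0 1 - 1)).comp g0 with hg1def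
    have hg1app : ∀ r, g1 r = g0 r - g0 r * (g0 1 - 1) := fun r => rfl
    have hg1mk : ∀ r, Ideal.Quotient.mk I (g1 r) = f r := fun r => by
      have h0 : Ideal.Quotient.mk I (g0 1 - 1) = 0 := by simp [hg0' 1]
      rw [hg1app, map_sub, map_mul, h0, mul_zero, sub_zero, hg0']
    have hg1one : g1 1 = 1 := by
      have h := hIsq _ _ hi₀ hi₀
      rw [hg1app]; linear_combination -h
    set d : R → R → B := fun p q => g1 (p * q) - g1 p * g1 q with hd
    have hdI : ∀ p q, d p q ∈ I := fun p q => memI _ (by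
      simp [hd, hg1mk, map_mul])
    set c : R → B := fun p => ∑ j, g1 (x j) * d (y j) p with hc
    have hcI : ∀ p, c p ∈ I := fun p =>
      Ideal.sum_mem _ fun j _ => Ideal.mul_mem_left _ _ (hdI _ _)
    -- cocycle identity
    have hco : ∀ p q r : R, g1 p * d q r - d (p * q) r + d p (q * r) - d p q * g1 r = 0 := by
      intro p q r
      have e : p * q * r = p * (q * r) := mul_assoc p q r
      simp only [hd, e]
      ring
    -- sum of g1 x * g1 y acts as 1 on I
    have key1 : ∀ b ∈ I, (∑ j, g1 (x j) * g1 (y j)) * b = b := by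
      intro b hb
      have hmem : (∑ j, g1 (x j) * g1 (y j)) - 1 ∈ I := memI _ (by
        have h2 : ∑ i, f (x i) * f (y i) = 1 := by
          rw [← map_one f, ← h1, map_sum]; simp [map_mul]
        simp [map_sub, map_sum, map_mul, hg1mk, h2])
      have := hIsq _ _ hmem hb
      linear_combination this
    -- key3 : twisted sum
    have key3 : ∀ p q : R, ∑ j, g1 (x j) * d (y j * p) q = g1 p * c q := by
      intro p q
      set Φ : R →ₗ[A] R →ₗ[A] B := LinearMap.mk₂ A (fun a b => g1 a * d b q)
        (fun a a' b => by simp only [map_add]; ring)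
        (fun s a b => by simp only [map_smul, smul_mul_assoc])
        (fun a b b' => by simp only [hd, add_mul, map_add]; ring)
        (fun s a b => by
          simp only [hd, map_smul, smul_mul_assoc, mul_smul_comm, ← smul_sub]
          try congr 1
          try ring) with hΦ
      have happ := congrArg (TensorProduct.lift Φ) (hcomm p)
      simp only [map_sum, TensorProduct.lift.tmul, hΦ, LinearMap.mk₂_apply] at happ
      -- happ : ∑ j, g1 (p * x j) * d (y j) q = ∑ j, g1 (x j) * d (y j * p) q
      rw [← happ, hc]
      rw [Finset.mul_sum]
      refine Finset.sum_congr rfl fun j _ => ?_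
      have hxpj : g1 (p * x j) = g1 p * g1 (x j) + d p (x j) := by
        simp [hd]
      have hz : d p (x j) * d (y j) q = 0 := hIsq _ _ (hdI _ _) (hdI _ _)
      rw [hxpj]
      linear_combination hz
    -- the main coboundary identity
    have keyd : ∀ p q : R, d p q = g1 p * c q - c (p * q) + c p * g1 q := by
      intro p q
      have hsum : ∑ j, g1 (x j) *
          (g1 (y j) * d p q - d (y j * p) q + d (y j) (p * q) - d (y j) p * g1 q) = 0 := by
        rw [Finset.sum_eq_zero]
        intro j _
        rw [hco (y j) p q, mul_zero]
      have hexp : ∀ j : ι, g1 (x j) *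
          (g1 (y j) * d p q - d (y j * p) q + d (y j) (p * q) - d (y j) p * g1 q)
          = g1 (x j) * g1 (y j) * d p q - g1 (x j) * d (y j * p) q
            + g1 (x j) * d (y j) (p * q) - (g1 (x j) * d (y j) p) * g1 q := fun j => by ring
      rw [Finset.sum_congr rfl fun j _ => hexp j] at hsum
      have hsplit : ∑ j, (g1 (x j) * g1 (y j) * d p q - g1 (x j) * d (y j * p) q
            + g1 (x j) * d (y j) (p * q) - (g1 (x j) * d (y j) p) * g1 q)
          = (∑ j, g1 (x j) * g1 (y j)) * d p q - (∑ j, g1 (x j) * d (y j * p) q)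
            + c (p * q) - c p * g1 q := by
        rw [hc]
        rw [Finset.sum_mul, Finset.sum_mul, ← Finset.sum_sub_distrib, ← Finset.sum_add_distrib,
          ← Finset.sum_sub_distrib]
      rw [hsplit, key1 _ (hdI p q), key3 p q] at hsum
      linear_combination hsum
    -- build the corrected linear map g2 = g1 + c
    set cL : R →ₗ[A] B := ∑ j, (LinearMap.mulLeft A (g1 (x j))).comp
        (g1.comp (LinearMap.mulLeft A (y j)) - (LinearMap.mulLeft A (g1 (y j))).comp g1)
      with hcL
    have hcLapp : ∀ p, cL p = c p := fun p => by
      rw [hcL, hc]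
      simp [LinearMap.sum_apply, hd]
    set g2 : R →ₗ[A] B := g1 + cL with hg2def
    have hg2app : ∀ r, g2 r = g1 r + c r := fun r => by
      rw [hg2def]; simp [hcLapp]
    have hg2one : g2 1 = 1 := by
      have hc1 : c 1 = 0 := by
        rw [hc]
        apply Finset.sum_eq_zero
        intro j _
        have : d (y j) 1 = 0 := by simp [hd, hg1one]
        rw [this, mul_zero]
      rw [hg2app, hc1, hg1one, add_zero]
    have hg2mul : ∀ p q : R, g2 (p * q) = g2 p * g2 q := by
      intro p q
      have hcc : c p * c q = 0 := hIsq _ _ (hcI p) (hcI q)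
      have hk := keyd p q
      rw [hg2app, hg2app, hg2app]
      rw [hd] at hk
      simp only at hk
      linear_combination hk - hcc
    set G : R →ₐ[A] B := AlgHom.mk'
      { toFun := fun r => g2 r
        map_one' := hg2one
        map_mul' := hg2mul
        map_zero' := map_zero g2
        map_add' := map_add g2 } (fun s r => map_smul g2 s r) with hG
    refine ⟨G, ?_⟩
    ext r
    have : Ideal.Quotient.mk I (g2 r) = f r := by
      rw [hg2app, map_add, hg1mk]
      have : Ideal.Quotient.mk I (c r) = 0 := Ideal.Quotient.eq_zero_iff_mem.mpr (hcI r)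
      rw [this, add_zero]
    simpa [hG] using this

end Abstract


theorem statement8 (n m : ℕ) (hn : 2 ≤ n) (hm : 2 ≤ m)
    (ε : ℂ) (hε : IsPrimitiveRoot ε m)
    (σ : RTilde n m ≃ₐ[ℂ] RTilde n m)
    (hσy : σ (yb n m) = ε • yb n m)
    (hσu : σ (ub n m) = ε⁻¹ • ub n m)
    (hσz : σ (zb n m) = zb n m) :
    Algebra.Etale (↥(AlgHom.equalizer σ.toAlgHom (AlgHom.id ℂ (RTilde n m)))) (RTilde n m) := by
  classical
  have hmpos : 0 < m := by omega
  have hm0 : (m : ℂ) ≠ 0 := Nat.cast_ne_zero.mpr (by omega)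
  have hεm : ε ^ m = 1 := hε.pow_eq_one
  -- powers of σ on generators
  have hpowy : ∀ i : ℕ, (σ ^ i) (yb n m) = ε ^ i • yb n m := by
    intro i
    induction i with
    | zero => simp
    | succ i ih =>
      rw [pow_succ, AlgEquiv.mul_apply, hσy, map_smul, ih, smul_smul, ← pow_succ']
  have hpowu : ∀ i : ℕ, (σ ^ i) (ub n m) = (ε⁻¹) ^ i • ub n m := by
    intro i
    induction i with
    | zero => simp
    | succ i ih =>
      rw [pow_succ, AlgEquiv.mul_apply, hσu, map_smul, ih, smul_smul, ← pow_succ']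
  have hpowz : ∀ i : ℕ, (σ ^ i) (zb n m) = zb n m := by
    intro i
    induction i with
    | zero => simp
    | succ i ih => rw [pow_succ, AlgEquiv.mul_apply, hσz, ih]
  -- σ^m = id
  have hσm : ∀ r : RTilde n m, (σ ^ m) r = r := by
    have hcomp : (↑(σ ^ m) : RTilde n m →ₐ[ℂ] RTilde n m).comp
        (Ideal.Quotient.mkₐ ℂ (relTilde n m)) = Ideal.Quotient.mkₐ ℂ (relTilde n m) := by
      apply MvPolynomial.algHom_ext
      intro i
      fin_cases i
      · show (σ ^ m) (yb n m) = yb n m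
        rw [hpowy, hεm, one_smul]
      · show (σ ^ m) (ub n m) = ub n m
        rw [hpowu, inv_pow, hεm, inv_one, one_smul]
      · show (σ ^ m) (zb n m) = zb n m
        exact hpowz m
    intro r
    obtain ⟨p, rfl⟩ := Ideal.Quotient.mk_surjective (I := relTilde n m) r
    have := AlgHom.congr_fun hcomp p
    exact this
  -- the defining relation
  have hrel : yb n m ^ ((n - 1) * m) * zb n m - ub n m ^ m + 1 = 0 := by
    have hmem : (X 0 ^ ((n - 1) * m) * X 2 - X 1 ^ m + 1 : MvPolynomial (Fin 3) ℂ)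
        ∈ relTilde n m := Ideal.subset_span rfl
    have h0 : (Ideal.Quotient.mk (relTilde n m)
        (X 0 ^ ((n - 1) * m) * X 2 - X 1 ^ m + 1) : RTilde n m) = 0 :=
      Ideal.Quotient.eq_zero_iff_mem.mpr hmem
    rw [map_add, map_sub, map_mul, map_pow, map_pow, map_one] at h0
    exact h0
  -- arithmetic helpers
  have hstep : ∀ (v : ℂ) (N k : ℕ), v ^ N = 1 → k ≤ N → v ^ (N - k) = (v⁻¹) ^ k := by
    intro v N k h1 hk
    have h2 : v ^ (N - k) * v ^ k = 1 := by rw [← pow_add, Nat.sub_add_cancel hk, h1]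
    rw [inv_pow]
    exact eq_inv_of_mul_eq_one_left h2
  have geom' : ∀ w : ℂ, w ^ m = 1 → w ≠ 1 → ∑ k ∈ Finset.range m, w ^ k = 0 := by
    intro w h1 hne
    rw [geom_sum_eq hne, h1, sub_self, zero_div]
  -- the Galois coordinate families
  set q : ℕ := (n - 1) * m with hq
  have hmq : m ≤ q := by
    rw [hq]
    calc m = 1 * m := (one_mul m).symm
    _ ≤ (n - 1) * m := Nat.mul_le_mul_right m (by omega)
  set xf : Fin m ⊕ Fin m → RTilde n m := Sum.elim
      (fun k => (m : ℂ)⁻¹ • ub n m ^ (k : ℕ))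
      (fun k => (-(m : ℂ)⁻¹) • yb n m ^ (k : ℕ)) with hxf
  set yf : Fin m ⊕ Fin m → RTilde n m := Sum.elim
      (fun k => ub n m ^ (m - (k : ℕ)))
      (fun k => yb n m ^ (q - (k : ℕ)) * zb n m) with hyf
  -- key identity
  have KI : ∀ i : ℕ, i < m →
      ∑ j, xf j * (σ ^ i) (yf j) = if i = 0 then 1 else 0 := by
    intro i hi
    have hwm : (ε ^ i) ^ m = 1 := by
      rw [← pow_mul, mul_comm, pow_mul, hεm, one_pow]
    have hwq : (ε ^ i) ^ q = 1 := by
      have hiq : i * q = i * (n - 1) * m := by rw [hq]; ring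
      rw [← pow_mul, hiq, pow_mul, pow_right_comm, hεm, one_pow]
    have hwm' : ((ε ^ i)⁻¹) ^ m = 1 := by rw [inv_pow, hwm, inv_one]
    have e1 : ∀ k : Fin m, xf (Sum.inl k) * (σ ^ i) (yf (Sum.inl k))
        = ((m : ℂ)⁻¹ * (ε ^ i) ^ (k : ℕ)) • ub n m ^ m := by
      intro k
      rw [hxf, hyf]
      simp only [Sum.elim_inl]
      rw [map_pow, hpowu, smul_pow, smul_mul_smul_comm]
      congr 1
      · rw [inv_pow, hstep (ε ^ i)⁻¹ m (k : ℕ) hwm' (le_of_lt k.2), inv_inv]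
      · rw [← pow_add, Nat.add_sub_cancel' (le_of_lt k.2)]
    have e2 : ∀ k : Fin m, xf (Sum.inr k) * (σ ^ i) (yf (Sum.inr k))
        = (-(m : ℂ)⁻¹ * ((ε ^ i)⁻¹) ^ (k : ℕ)) • (yb n m ^ q * zb n m) := by
      intro k
      have hkq : (k : ℕ) ≤ q := le_trans (le_of_lt k.2) hmq
      rw [hxf, hyf]
      simp only [Sum.elim_inr]
      rw [map_mul, map_pow, hpowy, hpowz, smul_pow,
        smul_mul_assoc ((ε ^ i) ^ (q - (k : ℕ))) (yb n m ^ (q - (k : ℕ))) (zb n m),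
        smul_mul_smul_comm]
      congr 1
      · rw [hstep (ε ^ i) q (k : ℕ) hwq hkq]
      · rw [← mul_assoc, ← pow_add, Nat.add_sub_cancel' hkq]
    rw [Fintype.sum_sum_type]
    rw [Finset.sum_congr rfl fun k _ => e1 k, Finset.sum_congr rfl fun k _ => e2 k,
      ← Finset.sum_smul, ← Finset.sum_smul, ← Finset.mul_sum, ← Finset.mul_sum,
      Fin.sum_univ_eq_sum_range (fun k => (ε ^ i) ^ k) m,
      Fin.sum_univ_eq_sum_range (fun k => ((ε ^ i)⁻¹) ^ k) m]
    by_cases h0 : i = 0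
    · subst h0
      simp only [pow_zero, inv_one, one_pow, ↓reduceIte]
      rw [Finset.sum_const, Finset.card_range, nsmul_eq_mul, mul_one,
        inv_mul_cancel₀ hm0, one_smul, neg_mul, inv_mul_cancel₀ hm0, Algebra.smul_def, map_neg, map_one, neg_one_mul]
      linear_combination -hrel
    · have hne : ε ^ i ≠ 1 := hε.pow_ne_one_of_pos_of_lt (by omega) hi
      have hne' : (ε ^ i)⁻¹ ≠ 1 := fun h => hne (by rwa [inv_eq_one] at h)
      rw [geom' _ hwm hne, geom' _ hwm' hne', mul_zero, mul_zero, zero_smul, zero_smul,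
        add_zero, if_neg h0]
  -- transposed key identity
  have KI' : ∀ i : ℕ, i < m →
      ∑ j, (σ ^ i) (xf j) * yf j = if i = 0 then 1 else 0 := by
    intro i hi
    rcases Nat.eq_zero_or_pos i with h0 | h0
    · subst h0
      have := KI 0 hmpos
      simpa using this
    · have hne0 : i ≠ 0 := by omega
      rw [if_neg hne0]
      apply (σ ^ (m - i)).injective
      rw [map_sum, map_zero]
      have hterm : ∀ j, (σ ^ (m - i)) ((σ ^ i) (xf j) * yf j)
          = xf j * (σ ^ (m - i)) (yf j) := by
        intro j
        rw [map_mul]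
        congr 1
        rw [← AlgEquiv.mul_apply, ← pow_add, Nat.sub_add_cancel (le_of_lt hi), hσm]
      rw [Finset.sum_congr rfl fun j _ => hterm j]
      have hKI := KI (m - i) (by omega)
      rw [hKI, if_neg (by omega : ¬ m - i = 0)]
  -- the trace
  set tr : RTilde n m → RTilde n m := fun r => ∑ i ∈ Finset.range m, (σ ^ i) r with htr
  have htrσ : ∀ r, σ (tr r) = tr r := by
    intro r
    rw [htr]
    simp only [map_sum]
    have h1 : ∀ i : ℕ, σ ((σ ^ i) r) = (σ ^ (i + 1)) r := fun i => by
      rw [pow_succ', AlgEquiv.mul_apply]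
    rw [Finset.sum_congr rfl fun i _ => h1 i]
    have h2 := Finset.sum_range_succ' (fun i => (σ ^ i) r) m
    have h3 := Finset.sum_range_succ (fun i => (σ ^ i) r) m
    have h4 : (σ ^ m) r = r := hσm r
    have h5 : (σ ^ 0) r = r := by simp
    linear_combination h3 - h2 + h4 - h5
  have trmem : ∀ r, tr r ∈ AlgHom.equalizer σ.toAlgHom (AlgHom.id ℂ (RTilde n m)) := by
    intro r
    rw [AlgHom.mem_equalizer]
    show σ (tr r) = tr r
    exact htrσ r
  have trmul : ∀ r s : RTilde n m, tr (r * s) = ∑ i ∈ Finset.range m, (σ ^ i) r * (σ ^ i) s := by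
    intro r s
    rw [htr]
    exact Finset.sum_congr rfl fun i _ => map_mul _ r s
  -- L4 and L5
  have L4 : ∀ r, ∑ j, xf j * tr (yf j * r) = r := by
    intro r
    have h1 : ∀ j, xf j * tr (yf j * r)
        = ∑ i ∈ Finset.range m, xf j * ((σ ^ i) (yf j) * (σ ^ i) r) := by
      intro j
      rw [trmul]
      exact Finset.mul_sum _ _ _
    rw [Finset.sum_congr rfl fun j _ => h1 j, Finset.sum_comm]
    have h2 : ∀ i ∈ Finset.range m, ∑ j, xf j * ((σ ^ i) (yf j) * (σ ^ i) r)
        = (if i = 0 then 1 else 0) * (σ ^ i) r := by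
      intro i hi
      rw [← KI i (Finset.mem_range.mp hi)]
      erw [Finset.sum_mul]
      exact Finset.sum_congr rfl fun j _ => (mul_assoc _ _ _).symm
    rw [Finset.sum_congr rfl h2]
    have h3 : ∀ i ∈ Finset.range m, (if i = 0 then (1:RTilde n m) else 0) * (σ ^ i) r
        = if i = 0 then (σ ^ i) r else 0 := by
      intro i _
      by_cases h : i = 0 <;> simp [h]
    rw [Finset.sum_congr rfl h3, Finset.sum_ite_eq' (Finset.range m) 0 (fun i => (σ ^ i) r),
      if_pos (Finset.mem_range.mpr hmpos)]
    simp
  have L5 : ∀ r, ∑ j, (tr (xf j * r)) * yf j = r := by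
    intro r
    have h1 : ∀ j, tr (xf j * r) * yf j
        = ∑ i ∈ Finset.range m, ((σ ^ i) (xf j) * yf j) * (σ ^ i) r := by
      intro j
      rw [trmul]
      erw [Finset.sum_mul]
      exact Finset.sum_congr rfl fun i _ => by ring
    rw [Finset.sum_congr rfl fun j _ => h1 j, Finset.sum_comm]
    have h2 : ∀ i ∈ Finset.range m, ∑ j, ((σ ^ i) (xf j) * yf j) * (σ ^ i) r
        = (if i = 0 then 1 else 0) * (σ ^ i) r := by
      intro i hi
      rw [← KI' i (Finset.mem_range.mp hi)]
      exact (Finset.sum_mul _ _ _).symm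
    rw [Finset.sum_congr rfl h2]
    have h3 : ∀ i ∈ Finset.range m, (if i = 0 then (1:RTilde n m) else 0) * (σ ^ i) r
        = if i = 0 then (σ ^ i) r else 0 := by
      intro i _
      by_cases h : i = 0 <;> simp [h]
    rw [Finset.sum_congr rfl h3, Finset.sum_ite_eq' (Finset.range m) 0 (fun i => (σ ^ i) r),
      if_pos (Finset.mem_range.mpr hmpos)]
    simp
  -- the invariant subalgebra
  set Aeq : Subalgebra ℂ (RTilde n m) :=
    AlgHom.equalizer σ.toAlgHom (AlgHom.id ℂ (RTilde n m)) with hAeqdef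
  have hfixa : ∀ a : Aeq, σ (↑a) = (↑a : RTilde n m) := fun a =>
    (AlgHom.mem_equalizer _ _ _).mp a.2
  have hfixpow : ∀ (i : ℕ) (a : Aeq), (σ ^ i) (↑a) = (↑a : RTilde n m) := by
    intro i a
    induction i with
    | zero => simp
    | succ i ih => rw [pow_succ', AlgEquiv.mul_apply, ih, hfixa]
  have hsm : ∀ (a : Aeq) (r : RTilde n m), a • r = ↑a * r := fun a r => by
    rw [Algebra.smul_def]; rfl
  have trlin : ∀ (a : Aeq) (r : RTilde n m), tr (↑a * r) = ↑a * tr r := by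
    intro a r
    rw [htr]
    erw [Finset.mul_sum]
    refine Finset.sum_congr rfl fun i _ => ?_
    rw [map_mul, hfixpow i a]
  set trA : RTilde n m →ₗ[Aeq] Aeq :=
    { toFun := fun r => ⟨tr r, trmem r⟩
      map_add' := fun r s => Subtype.ext (by
        show tr (r + s) = tr r + tr s
        rw [htr]
        simp [Finset.sum_add_distrib])
      map_smul' := fun a r => Subtype.ext (by
        show tr (a • r) = ↑a * tr r
        rw [hsm, trlin]) } with htrA
  have htrAapp : ∀ r, trA r = ⟨tr r, trmem r⟩ := fun r => rfl
  -- the commutation identity in the tensor product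
  have hcomm : ∀ s : RTilde n m,
      ∑ j, (s * xf j) ⊗ₜ[Aeq] yf j = ∑ j, xf j ⊗ₜ[Aeq] (yf j * s) := by
    intro s
    have step1 : ∀ j, (s * xf j) ⊗ₜ[Aeq] yf j
        = ∑ k, xf k ⊗ₜ[Aeq] ((tr (yf k * (s * xf j))) * yf j) := by
      intro j
      conv_lhs => rw [← L4 (s * xf j)]
      rw [TensorProduct.sum_tmul]
      refine Finset.sum_congr rfl fun k _ => ?_
      have h1 : xf k * tr (yf k * (s * xf j))
          = (⟨tr (yf k * (s * xf j)), trmem _⟩ : Aeq) • xf k := by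
        rw [hsm]; exact mul_comm _ _
      rw [h1, TensorProduct.smul_tmul, hsm]
    rw [Finset.sum_congr rfl fun j _ => step1 j, Finset.sum_comm]
    refine Finset.sum_congr rfl fun k _ => ?_
    rw [← TensorProduct.tmul_sum]
    congr 1
    have h2 : ∀ j, (tr (yf k * (s * xf j))) * yf j = tr (xf j * (yf k * s)) * yf j := by
      intro j
      have he : yf k * (s * xf j) = xf j * (yf k * s) := by ring
      rw [he]
    rw [Finset.sum_congr rfl fun j _ => h2 j]
    exact L5 (yf k * s)
  have h1fam : ∑ j, xf j * yf j = 1 := by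
    have := KI 0 hmpos
    simpa using this
  -- projectivity and finiteness of R over Aeq
  set T : RTilde n m →ₗ[Aeq] ((Fin m ⊕ Fin m) → Aeq) :=
    LinearMap.pi fun j => trA ∘ₗ Algebra.lmul Aeq (RTilde n m) (yf j) with hT
  set S : ((Fin m ⊕ Fin m) → Aeq) →ₗ[Aeq] RTilde n m :=
    ∑ j, (LinearMap.proj j).smulRight (xf j) with hS
  have hST : ∀ r, S (T r) = r := by
    intro r
    rw [hS, hT]
    simp only [LinearMap.sum_apply, LinearMap.smulRight_apply, LinearMap.proj_apply,
      LinearMap.pi_apply, LinearMap.comp_apply, Algebra.coe_lmul_eq_mul, LinearMap.mul_apply', htrAapp]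
    have h1 : ∀ j : Fin m ⊕ Fin m, (⟨tr (yf j * r), trmem _⟩ : Aeq) • xf j
        = xf j * tr (yf j * r) := fun j => by
      rw [hsm]; exact mul_comm _ _
    rw [Finset.sum_congr rfl fun j _ => h1 j]
    exact L4 r
  haveI hproj : Module.Projective Aeq (RTilde n m) :=
    Module.Projective.of_split T S (LinearMap.ext fun r => hST r)
  haveI hfin : Module.Finite Aeq (RTilde n m) :=
    Module.Finite.of_surjective S (fun r => ⟨T r, hST r⟩)
  -- finite presentation
  haveI hftC : Algebra.FiniteType ℂ (RTilde n m) :=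
    Algebra.FiniteType.of_surjective
      (Ideal.Quotient.mkₐ ℂ (relTilde n m) : MvPolynomial (Fin 3) ℂ →ₐ[ℂ] RTilde n m)
      Ideal.Quotient.mk_surjective
  haveI hnoeth : IsNoetherianRing Aeq := by
    have h1 : (⊤ : Subalgebra ℂ (RTilde n m)).FG := hftC.1
    have h2 : (⊤ : Submodule Aeq (RTilde n m)).FG := Module.finite_def.mp hfin
    have h3 : Function.Injective (algebraMap Aeq (RTilde n m)) := fun a b h => Subtype.ext h
    have h4 := fg_of_fg_of_fg (A := ℂ) (B := Aeq) (C := RTilde n m) h1 h2 h3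
    haveI : Algebra.FiniteType ℂ Aeq := ⟨h4⟩
    exact Algebra.FiniteType.isNoetherianRing ℂ Aeq
  haveI hFP : Algebra.FinitePresentation Aeq (RTilde n m) :=
    (Algebra.FinitePresentation.of_finiteType).mp inferInstance
  haveI hFE : Algebra.FormallyEtale Aeq (RTilde n m) :=
    formallyEtale_of_sep xf yf h1fam hcomm
  exact { formallyEtale := hFE, finitePresentation := hFP }

end
end
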